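/- Let K = {2π(m+1/2)/L : m ∈ ℤ} and K_box = {2πnm/L : m ∈ ℤ} for integers n ≥ 1 and L > 0. Define φ(λ, (α,b)) = (i√n/L)·(1 − e^{iLλ/n})/(λ−α)·e^{−iLbλ/n} for λ ∈ K, α ∈ K_box, b ∈ {1,...,n}. Then for fixed λ, μ ∈ K: ∑_{α∈K_box} ∑_{b=1}^{n} φ(λ,(α,b))* · φ(μ,(α,b)) = δ_{λ,μ}. -/

import Mathlib

open scoped BigOperators

open MeasureTheory Complex Real

/-- Momenta of the full system: `λ_m = 2π(m+1/2)/L`. -/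
noncomputable def lamK (L : ℝ) (m : ℤ) : ℝ := 2 * Real.pi * ((m : ℝ) + 1 / 2) / L

/-- Box momenta: `α_m = 2πnm/L`. -/
noncomputable def kbox (L : ℝ) (n : ℕ) (m : ℤ) : ℝ := 2 * Real.pi * (n : ℝ) * (m : ℝ) / L

/-- Overlap `φ(λ,(α,b)) = (i√n/L)·(1 − e^{iLλ/n})/(λ−α)·e^{−iLbλ/n}`. -/
noncomputable def phi (L : ℝ) (n : ℕ) (l α : ℝ) (b : ℕ) : ℂ :=
  Complex.I * (Real.sqrt n : ℂ) / (L : ℂ) *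
    ((1 - Complex.exp (Complex.I * (L : ℂ) * (l : ℂ) / (n : ℂ))) / ((l : ℂ) - (α : ℂ))) *
    Complex.exp (-Complex.I * (L : ℂ) * (b : ℂ) * (l : ℂ) / (n : ℂ))

/- ### Auxiliary lemmas -/

lemma fourierCoeffOn_exp {T : ℝ} (hT : 0 < T) (a ν : ℝ) (m : ℤ) (hν : ν ≠ 2 * π * m / T) :
    fourierCoeffOn (lt_add_of_pos_right a hT) (fun t : ℝ => Complex.exp (Complex.I * ν * t)) m =
      (Complex.exp (Complex.I * ((ν : ℂ) - 2*π*m/T) * (a+T)) -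
        Complex.exp (Complex.I * ((ν : ℂ) - 2*π*m/T) * a)) /
        (Complex.I * ((ν : ℂ) - 2*π*m/T) * T) := by
  have hT0 : (T : ℂ) ≠ 0 := by exact_mod_cast hT.ne'
  have hd : ((ν : ℂ) - 2*π*m/T) ≠ 0 := by
    have : ((ν - 2*π*m/T : ℝ) : ℂ) ≠ 0 := by
      exact_mod_cast sub_ne_zero.mpr hν
    push_cast at this
    convert this using 2
  have hc : (Complex.I * ((ν : ℂ) - 2*π*m/T)) ≠ 0 := mul_ne_zero Complex.I_ne_zero hd
  rw [fourierCoeffOn_eq_integral]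
  have : ∀ x : ℝ, (fourier (-m)) (x : AddCircle (a + T - a)) • Complex.exp (Complex.I * ν * x)
      = Complex.exp ((Complex.I * ((ν : ℂ) - 2*π*m/T)) * x) := by
    intro x
    rw [fourier_coe_apply, smul_eq_mul, ← Complex.exp_add]
    congr 1
    have : a + T - a = T := by ring
    rw [this]
    push_cast
    field_simp
    ring
  rw [intervalIntegral.integral_congr (fun x _ => this x), integral_exp_mul_complex hc]
  have h2 : a + T - a = T := by ring
  rw [h2]
  rw [real_smul]
  push_cast
  field_simp

lemma measurable_liftIoc {T : ℝ} [hT : Fact (0 < T)] (a : ℝ) (f : ℝ → ℂ) (hf : Measurable f) :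
    Measurable (AddCircle.liftIoc T a f) := by
  have : AddCircle.liftIoc T a f =
      ((Set.Ioc a (a+T)).restrict f) ∘ (AddCircle.measurableEquivIoc T a) := rfl
  rw [this]
  exact (hf.comp measurable_subtype_coe).comp (AddCircle.measurableEquivIoc T a).measurable

lemma memLp_liftIoc {T : ℝ} [hT : Fact (0 < T)] (a : ℝ) (f : ℝ → ℂ) (hf : Measurable f)
    (hbd : ∀ t, ‖f t‖ ≤ 1) :
    MemLp (AddCircle.liftIoc T a f) 2 AddCircle.haarAddCircle :=
  MemLp.of_bound (measurable_liftIoc a f hf).aestronglyMeasurable 1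
    (Filter.Eventually.of_forall fun x => by
      rcases (AddCircle.equivIoc T a x) with ⟨y, hy⟩
      exact hbd _)

lemma fourierCoeff_congr_ae' {T : ℝ} [hT : Fact (0 < T)] {f g : AddCircle T → ℂ}
    (h : f =ᵐ[AddCircle.haarAddCircle] g) (m : ℤ) : fourierCoeff f m = fourierCoeff g m := by
  unfold fourierCoeff
  exact integral_congr_ae (h.mono fun x hx => by dsimp only; rw [hx])

lemma phi_eq_conj_coeff (L : ℝ) (hL : 0 < L) (n : ℕ) (hn : 1 ≤ n) (ν α : ℝ)
    (hνα : (ν : ℂ) - (α : ℂ) ≠ 0)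
    (hα : Complex.exp (-(Complex.I * (α : ℂ) * ((L : ℂ)/(n : ℂ)))) = 1) (b : ℕ) :
    phi L n ν α (b + 1) =
      ((Real.sqrt n : ℂ))⁻¹ * (starRingEnd ℂ)
        ((Complex.exp (Complex.I * ((ν : ℂ) - (α : ℂ)) * (((b:ℂ)+1) * ((L:ℂ)/(n:ℂ)))) -
          Complex.exp (Complex.I * ((ν : ℂ) - (α : ℂ)) * ((b:ℂ) * ((L:ℂ)/(n:ℂ))))) /
          (Complex.I * ((ν : ℂ) - (α : ℂ)) * ((L:ℂ)/(n:ℂ)))) := by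
  have hn0 : (n : ℝ) ≠ 0 := by positivity
  have hnC : (n : ℂ) ≠ 0 := by exact_mod_cast hn0
  have hLC : (L : ℂ) ≠ 0 := by exact_mod_cast hL.ne'
  have hs : (Real.sqrt n : ℂ) ≠ 0 := by
    simp only [ne_eq, ofReal_eq_zero]
    positivity
  have hsq : (Real.sqrt n : ℂ) * (Real.sqrt n : ℂ) = (n : ℂ) := by
    rw [← ofReal_mul, Real.mul_self_sqrt (Nat.cast_nonneg n)]; norm_cast
  set u : ℂ := Complex.exp (Complex.I * ν * ((L:ℂ)/(n:ℂ))) with hu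
  have hu0 : u ≠ 0 := Complex.exp_ne_zero _
  have e1 : ∀ j : ℕ, Complex.exp (Complex.I * ((ν : ℂ) - (α : ℂ)) * ((j:ℂ) * ((L:ℂ)/(n:ℂ)))) =
      u ^ j := by
    intro j
    have : Complex.I * ((ν : ℂ) - (α : ℂ)) * ((j:ℂ) * ((L:ℂ)/(n:ℂ)))
        = (j:ℕ) * (Complex.I * ν * ((L:ℂ)/(n:ℂ))) + (j:ℕ) * (-(Complex.I * (α : ℂ) * ((L : ℂ)/(n : ℂ)))) := by
      push_cast; ring
    rw [this, Complex.exp_add, Complex.exp_nat_mul, Complex.exp_nat_mul, hα, one_pow, mul_one, hu]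
  have e2 : Complex.exp (Complex.I * ((ν : ℂ) - (α : ℂ)) * (((b:ℂ)+1) * ((L:ℂ)/(n:ℂ)))) = u ^ (b+1) := by
    have := e1 (b+1); push_cast at this ⊢; exact this
  have e3 : Complex.exp (-Complex.I * (L : ℂ) * ((b+1 : ℕ) : ℂ) * (ν : ℂ) / (n : ℂ)) = (u⁻¹) ^ (b+1) := by
    rw [hu, ← Complex.exp_neg, ← Complex.exp_nat_mul]
    congr 1
    push_cast; ring
  have e4 : Complex.exp (Complex.I * (L : ℂ) * (ν : ℂ) / (n : ℂ)) = u := by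
    rw [hu]; congr 1; ring
  rw [phi, e2, e1 b, e4, e3]
  set x : ℂ := Complex.exp (-(Complex.I * ν * ((L:ℂ)/(n:ℂ)))) with hxdef
  have hx0 : x ≠ 0 := Complex.exp_ne_zero _
  have hcu : (starRingEnd ℂ) u = x := by
    rw [hu, hxdef, ← Complex.exp_conj]
    congr 1
    simp only [map_mul, map_div₀, Complex.conj_I, Complex.conj_ofReal, map_natCast]
    ring
  have hux : u = x⁻¹ := by
    rw [hu, hxdef, ← Complex.exp_neg, neg_neg]
  simp only [map_div₀, map_sub, map_mul, map_pow, Complex.conj_I, Complex.conj_ofReal,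
    map_one, map_add, map_natCast, ← Complex.exp_conj, hcu]
  rw [hux]
  have hsq2 : (Real.sqrt n : ℂ)^2 = (n:ℂ) := by rw [sq]; exact hsq
  field_simp
  ring_nf
  rw [Complex.I_sq, hsq2]
  ring

lemma lamK_ne (L : ℝ) (hL : 0 < L) (n : ℕ) (hn : 1 ≤ n) (m' m : ℤ) :
    lamK L m' ≠ 2 * π * m / (L / n) := by
  have hn0 : (n : ℝ) ≠ 0 := by positivity
  have hπ : (π : ℝ) ≠ 0 := Real.pi_ne_zero
  intro h
  rw [lamK] at h
  field_simp at h
  have hπL : (π * L : ℝ) ≠ 0 := by positivity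
  have h2 : (2 * m' + 1 : ℝ) = 2 * (m * n) := by
    have h' : ((2 * m' + 1 : ℝ)) * (π * L) = (2 * ((m:ℝ) * n)) * (π * L) := by
      push_cast at h ⊢; linear_combination (π * L) * h
    have := mul_right_cancel₀ hπL h'
    push_cast at this ⊢; linarith
  have h3 : (2 * m' + 1 : ℤ) = 2 * (m * n) := by exact_mod_cast h2
  omega

lemma lamK_sub_kbox_ne (L : ℝ) (hL : 0 < L) (n : ℕ) (hn : 1 ≤ n) (m' m : ℤ) :
    ((lamK L m' : ℝ) : ℂ) - ((kbox L n m : ℝ) : ℂ) ≠ 0 := by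
  have hn0 : (n : ℝ) ≠ 0 := by positivity
  have : (kbox L n m : ℝ) = 2 * π * m / (L / n) := by
    rw [kbox]; field_simp
  rw [← ofReal_sub, ne_eq, ofReal_eq_zero, sub_eq_zero, this]
  exact_mod_cast lamK_ne L hL n hn m' m

lemma exp_kbox (L : ℝ) (hL : 0 < L) (n : ℕ) (hn : 1 ≤ n) (m : ℤ) :
    Complex.exp (-(Complex.I * ((kbox L n m : ℝ) : ℂ) * ((L : ℂ)/(n : ℂ)))) = 1 := by
  have hn0 : (n : ℝ) ≠ 0 := by positivity
  have hLC : (L : ℂ) ≠ 0 := by exact_mod_cast hL.ne'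
  have hnC : (n : ℂ) ≠ 0 := by exact_mod_cast hn0
  have harg : -(Complex.I * ((kbox L n m : ℝ) : ℂ) * ((L : ℂ)/(n : ℂ)))
      = (-m : ℤ) * (2 * (π : ℂ) * Complex.I) := by
    rw [kbox]; push_cast; field_simp
  rw [harg, Complex.exp_int_mul_two_pi_mul_I]

lemma coeff_shape (L : ℝ) (hL : 0 < L) (n : ℕ) (hn : 1 ≤ n) (ν : ℝ) (m : ℤ) (b : ℕ)
    (hT : 0 < L / n) (hν : ν ≠ 2 * π * m / (L / n)) :
    fourierCoeffOn (lt_add_of_pos_right ((b : ℝ) * (L/n)) hT)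
        (fun t : ℝ => Complex.exp (Complex.I * ν * t)) m =
      (Complex.exp (Complex.I * ((ν : ℂ) - ((kbox L n m : ℝ) : ℂ)) * (((b:ℂ)+1) * ((L:ℂ)/(n:ℂ)))) -
        Complex.exp (Complex.I * ((ν : ℂ) - ((kbox L n m : ℝ) : ℂ)) * ((b:ℂ) * ((L:ℂ)/(n:ℂ))))) /
        (Complex.I * ((ν : ℂ) - ((kbox L n m : ℝ) : ℂ)) * ((L:ℂ)/(n:ℂ))) := by
  have hn0 : (n : ℝ) ≠ 0 := by positivity
  have hLC : (L : ℂ) ≠ 0 := by exact_mod_cast hL.ne'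
  have hnC : (n : ℂ) ≠ 0 := by exact_mod_cast hn0
  have hα : ((kbox L n m : ℝ) : ℂ) = 2*(π:ℂ)*(m:ℂ)/(((L/n : ℝ)):ℂ) := by
    rw [kbox]; push_cast; field_simp
  rw [fourierCoeffOn_exp hT _ ν m hν, hα]
  have h1 : ((L/n : ℝ) : ℂ) = (L:ℂ)/(n:ℂ) := by push_cast; ring
  rw [h1]
  congr 2
  · congr 1
    push_cast; ring
  · congr 1
    push_cast; ring

lemma fourierCoeffOn_one {a T : ℝ} (hT : 0 < T) :
    fourierCoeffOn (lt_add_of_pos_right a hT) (fun t : ℝ => Complex.exp (Complex.I * ((0:ℝ)) * t)) 0 = 1 := by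
  rw [fourierCoeffOn_eq_integral]
  simp only [neg_zero, fourier_zero, one_smul, ofReal_zero, mul_zero, zero_mul, Complex.exp_zero]
  rw [intervalIntegral.integral_const]
  simp only [add_sub_cancel_left, smul_eq_mul, real_smul]
  push_cast
  field_simp
  exact div_self (ofReal_ne_zero.mpr hT.ne')

lemma hasSum_prod_fin {n : ℕ} {f : ℤ × Fin n → ℂ} {S : Fin n → ℂ}
    (h : ∀ b : Fin n, HasSum (fun m : ℤ => f (m, b)) (S b)) :
    HasSum f (∑ b : Fin n, S b) := by
  have H : ∀ b : Fin n, HasSum (fun p : ℤ × Fin n => if p.2 = b then f p else 0) (S b) := by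
    intro b
    have hinj : Function.Injective (fun m : ℤ => ((m, b) : ℤ × Fin n)) := by
      intro x y hxy; simpa using congrArg Prod.fst hxy
    have hvan : ∀ p : ℤ × Fin n, p ∉ Set.range (fun m : ℤ => ((m, b) : ℤ × Fin n)) →
        (if p.2 = b then f p else 0) = 0 := by
      intro p hp
      have : p.2 ≠ b := by
        intro hb
        exact hp ⟨p.1, by cases p; simp_all⟩
      simp [this]
    rw [← Function.Injective.hasSum_iff hinj hvan]
    simpa [Function.comp_def] using h b
  have H2 := hasSum_sum (s := (Finset.univ : Finset (Fin n))) (fun b _ => H b)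
  have hfun : (fun p : ℤ × Fin n => ∑ b : Fin n, if p.2 = b then f p else 0) = f := by
    funext p
    rw [Finset.sum_ite_eq]
    simp
  rwa [hfun] at H2

/- ### The fiberwise Parseval identity -/

lemma fiber_hasSum (L : ℝ) (hL : 0 < L) (n : ℕ) (hn : 1 ≤ n) (m₁ m₂ : ℤ) (b : ℕ)
    (hT : Fact (0 < L / n)) :
    HasSum (fun m : ℤ =>
        (starRingEnd ℂ) (phi L n (lamK L m₁) (kbox L n m) (b + 1)) *
          phi L n (lamK L m₂) (kbox L n m) (b + 1))
      ((n : ℂ)⁻¹ * fourierCoeffOn (lt_add_of_pos_right ((b:ℝ) * (L/n)) hT.out)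
          (fun t : ℝ => Complex.exp (Complex.I * ((lamK L m₁ - lamK L m₂ : ℝ)) * t)) 0) := by
  have hn0 : (n:ℝ) ≠ 0 := by positivity
  have hs : (Real.sqrt n : ℂ) ≠ 0 := by
    simp only [ne_eq, ofReal_eq_zero]
    positivity
  have hsq : (Real.sqrt n : ℂ) * (Real.sqrt n : ℂ) = (n : ℂ) := by
    rw [← ofReal_mul, Real.mul_self_sqrt (Nat.cast_nonneg n)]; norm_cast
  have hmeas : ∀ ν : ℝ, Measurable fun t : ℝ => Complex.exp (Complex.I * ν * t) := fun ν =>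
    (Complex.continuous_exp.comp (continuous_const.mul Complex.continuous_ofReal)).measurable
  have hbd : ∀ (ν : ℝ) (t : ℝ), ‖Complex.exp (Complex.I * ν * t)‖ ≤ 1 := by
    intro ν t
    rw [Complex.norm_exp]
    simp
  have hml : ∀ ν : ℝ, MemLp (AddCircle.liftIoc (L/n) ((b:ℝ)*(L/n))
      fun t : ℝ => Complex.exp (Complex.I * ν * t)) 2 AddCircle.haarAddCircle :=
    fun ν => memLp_liftIoc _ _ (hmeas ν) (hbd ν)
  set X : ℝ → Lp ℂ 2 (AddCircle.haarAddCircle (T := L/n)) := fun ν => ((hml ν).toLp _) with hX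
  have hcoeff : ∀ (ν : ℝ) (m : ℤ), fourierCoeff (↑↑(X ν) : AddCircle (L/n) → ℂ) m
      = fourierCoeffOn (lt_add_of_pos_right ((b:ℝ)*(L/n)) hT.out)
          (fun t : ℝ => Complex.exp (Complex.I * ν * t)) m := by
    intro ν m
    rw [fourierCoeff_congr_ae' ((hml ν).coeFn_toLp) m, fourierCoeff_liftIoc_eq]
  have HP := fourierBasis.hasSum_inner_mul_inner (X (lamK L m₂)) (X (lamK L m₁))
  simp only [← inner_conj_symm (X (lamK L m₂)), ← HilbertBasis.repr_apply_apply,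
    fourierBasis_repr] at HP
  rw [inner_conj_symm] at HP
  have hinner : (inner ℂ (X (lamK L m₂)) (X (lamK L m₁)) : ℂ)
      = fourierCoeffOn (lt_add_of_pos_right ((b:ℝ)*(L/n)) hT.out)
          (fun t : ℝ => Complex.exp (Complex.I * ((lamK L m₁ - lamK L m₂ : ℝ)) * t)) 0 := by
    have hfun : (fun t : ℝ => Complex.exp (Complex.I * ((lamK L m₁ - lamK L m₂ : ℝ)) * t))
        = fun t : ℝ => (starRingEnd ℂ) (Complex.exp (Complex.I * (lamK L m₂ : ℝ) * t)) *
            Complex.exp (Complex.I * (lamK L m₁ : ℝ) * t) := by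
      funext t
      rw [← Complex.exp_conj, ← Complex.exp_add]
      congr 1
      simp only [map_mul, Complex.conj_I, Complex.conj_ofReal]
      push_cast; ring
    rw [← fourierCoeff_liftIoc_eq, hfun, MeasureTheory.L2.inner_def]
    have hcz : fourierCoeff (AddCircle.liftIoc (L/n) ((b:ℝ)*(L/n))
        (fun t : ℝ => (starRingEnd ℂ) (Complex.exp (Complex.I * (lamK L m₂ : ℝ) * t)) *
          Complex.exp (Complex.I * (lamK L m₁ : ℝ) * t))) 0
        = ∫ z : AddCircle (L/n), (AddCircle.liftIoc (L/n) ((b:ℝ)*(L/n))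
            (fun t : ℝ => (starRingEnd ℂ) (Complex.exp (Complex.I * (lamK L m₂ : ℝ) * t)) *
              Complex.exp (Complex.I * (lamK L m₁ : ℝ) * t))) z ∂AddCircle.haarAddCircle := by
      unfold fourierCoeff
      simp only [neg_zero, fourier_zero, one_smul]
    rw [hcz]
    apply integral_congr_ae
    filter_upwards [(hml (lamK L m₂)).coeFn_toLp, (hml (lamK L m₁)).coeFn_toLp] with z h2 h1
    show (inner ℂ ((X (lamK L m₂)) z) ((X (lamK L m₁)) z) : ℂ) = _
    rw [RCLike.inner_apply, h2, h1]
    rw [mul_comm]; rfl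
  have key : ∀ i : ℤ,
      (starRingEnd ℂ) (phi L n (lamK L m₁) (kbox L n i) (b + 1)) *
        phi L n (lamK L m₂) (kbox L n i) (b + 1)
      = (n : ℂ)⁻¹ * ((starRingEnd ℂ) (fourierCoeff (↑↑(X (lamK L m₂))) i) *
          fourierCoeff (↑↑(X (lamK L m₁))) i) := by
    intro i
    rw [hcoeff, hcoeff,
      coeff_shape L hL n hn _ i b hT.out (lamK_ne L hL n hn m₂ i),
      coeff_shape L hL n hn _ i b hT.out (lamK_ne L hL n hn m₁ i),
      phi_eq_conj_coeff L hL n hn (lamK L m₁) (kbox L n i)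
        (lamK_sub_kbox_ne L hL n hn m₁ i) (exp_kbox L hL n hn i) b,
      phi_eq_conj_coeff L hL n hn (lamK L m₂) (kbox L n i)
        (lamK_sub_kbox_ne L hL n hn m₂ i) (exp_kbox L hL n hn i) b]
    simp only [map_mul, map_inv₀, Complex.conj_conj, Complex.conj_ofReal]
    rw [← hsq, mul_inv]
    ring
  have H2 := HP.mul_left ((n : ℂ)⁻¹)
  rw [funext key, ← hinner]
  exact H2

lemma lamK_inj (L : ℝ) (hL : 0 < L) (m₁ m₂ : ℤ) (h : m₁ ≠ m₂) :
    lamK L m₁ - lamK L m₂ ≠ 0 := by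
  have hπ : (0:ℝ) < π := Real.pi_pos
  intro heq
  apply h
  have h2 : (m₁ : ℝ) = m₂ := by
    rw [lamK, lamK, div_sub_div_same] at heq
    have h3 : 2 * π * ((m₁:ℝ) + 1/2) - 2 * π * ((m₂:ℝ) + 1/2) = 0 := by
      have := (div_eq_zero_iff.mp heq).resolve_right hL.ne'
      linarith [this]
    nlinarith [h3]
  exact_mod_cast h2

/-- Completeness of the wavelet family: for `λ, μ ∈ K`,
`∑_{α∈K_box} ∑_{b=1}^n φ(λ,(α,b))* φ(μ,(α,b)) = δ_{λ,μ}`, the double sum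
converging (absolutely/unconditionally). -/
theorem stmt5 (L : ℝ) (hL : 0 < L) (n : ℕ) (hn : 1 ≤ n) (m₁ m₂ : ℤ) :
    HasSum (fun x : ℤ × Fin n =>
        (starRingEnd ℂ) (phi L n (lamK L m₁) (kbox L n x.1) (x.2.val + 1)) *
          phi L n (lamK L m₂) (kbox L n x.1) (x.2.val + 1))
      (if m₁ = m₂ then 1 else 0) := by
  have hn0 : (n : ℝ) ≠ 0 := by positivity
  have hnC : (n : ℂ) ≠ 0 := by exact_mod_cast hn0
  have hLC : (L : ℂ) ≠ 0 := by exact_mod_cast hL.ne'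
  haveI hT : Fact (0 < L / n) := ⟨by positivity⟩
  have hfib := fun b : Fin n => fiber_hasSum L hL n hn m₁ m₂ b.val hT
  have Hprod := hasSum_prod_fin (f := fun x : ℤ × Fin n =>
      (starRingEnd ℂ) (phi L n (lamK L m₁) (kbox L n x.1) (x.2.val + 1)) *
        phi L n (lamK L m₂) (kbox L n x.1) (x.2.val + 1)) hfib
  convert Hprod using 1
  by_cases h : m₁ = m₂
  · subst h
    rw [if_pos rfl]
    symm
    have hstep : ∀ b : Fin n,
        (n : ℂ)⁻¹ * fourierCoeffOn (lt_add_of_pos_right (((b:ℕ):ℝ) * (L/n)) hT.out)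
          (fun t : ℝ => Complex.exp (Complex.I * ((lamK L m₁ - lamK L m₁ : ℝ)) * t)) 0
        = (n : ℂ)⁻¹ := by
      intro b
      rw [show (lamK L m₁ - lamK L m₁ : ℝ) = 0 from sub_self _, fourierCoeffOn_one hT.out, mul_one]
    rw [Finset.sum_congr rfl (fun b _ => hstep b), Finset.sum_const, Finset.card_univ,
      Fintype.card_fin, nsmul_eq_mul]
    exact mul_inv_cancel₀ hnC
  · rw [if_neg h]
    symm
    set ν : ℝ := lamK L m₁ - lamK L m₂ with hν
    have hν0 : ν ≠ 0 := lamK_inj L hL m₁ m₂ h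
    have hνz : ν ≠ 2 * π * ((0:ℤ)) / (L/n) := by simpa using hν0
    set f : ℕ → ℂ := fun j => Complex.exp (Complex.I * (ν:ℂ) * ((j:ℂ) * ((L:ℂ)/(n:ℂ)))) with hf
    set c : ℂ := (n : ℂ)⁻¹ / (Complex.I * (ν:ℂ) * ((L:ℂ)/(n:ℂ))) with hc
    have hstep : ∀ b : Fin n,
        (n : ℂ)⁻¹ * fourierCoeffOn (lt_add_of_pos_right (((b:ℕ):ℝ) * (L/n)) hT.out)
          (fun t : ℝ => Complex.exp (Complex.I * (ν : ℝ) * t)) 0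
        = c * (f ((b:ℕ)+1) - f (b:ℕ)) := by
      intro b
      rw [fourierCoeffOn_exp hT.out _ _ 0 hνz, hc, hf]
      rw [show ((ν:ℂ) - 2*(π:ℂ)*((0:ℤ):ℂ)/((L/n : ℝ):ℂ)) = (ν:ℂ) by push_cast; ring]
      rw [show ((((b:ℕ):ℝ) * (L/n) : ℝ):ℂ) + ((L/n : ℝ):ℂ) = ((((b:ℕ):ℂ)+1) * ((L:ℂ)/(n:ℂ))) by push_cast; ring]
      rw [show ((((b:ℕ):ℝ) * (L/n) : ℝ):ℂ) = (((b:ℕ):ℂ) * ((L:ℂ)/(n:ℂ))) by push_cast; ring]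
      rw [show ((L/n : ℝ):ℂ) = (L:ℂ)/(n:ℂ) by push_cast; ring]
      push_cast
      ring
    rw [Finset.sum_congr rfl (fun b _ => hstep b)]
    rw [show (∑ b : Fin n, c * (f ((b:ℕ)+1) - f (b:ℕ)))
        = ∑ b ∈ Finset.range n, c * (f (b+1) - f b) from
      Fin.sum_univ_eq_sum_range (fun j => c * (f (j+1) - f j)) n]
    rw [← Finset.mul_sum, Finset.sum_range_sub f n]
    have hfn : f n = 1 := by
      show Complex.exp (Complex.I * (ν:ℂ) * ((n:ℂ) * ((L:ℂ)/(n:ℂ)))) = 1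
      have : Complex.I * (ν:ℂ) * ((n:ℂ) * ((L:ℂ)/(n:ℂ))) = ((m₁ - m₂ : ℤ):ℂ) * (2*(π:ℂ)*Complex.I) := by
        rw [hν, lamK, lamK]
        push_cast
        field_simp
        ring
      rw [this, Complex.exp_int_mul_two_pi_mul_I]
    have hf0 : f 0 = 1 := by
      show Complex.exp (Complex.I * (ν:ℂ) * (((0:ℕ):ℂ) * ((L:ℂ)/(n:ℂ)))) = 1
      norm_num
    rw [hfn, hf0, sub_self, mul_zero]
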